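/- For n sensors with independent observations T_j ~ Erlang(2λ_T, 2λ_T/μ_j(s,θ)), μ_j(s,θ) = (a_j sin θ + b_j cos θ)/s > 0 where a_j = x_j - x0, b_j = y_j - y0, the Fisher information cross term satisfies -E[∂² log L / ∂s ∂θ] = -(2λ_T/s) · Σ_j (a_j cos θ - b_j sin θ)/(a_j sin θ + b_j cos θ). -/

import Mathlib

open MeasureTheory

theorem stmt_13 {Ω : Type*} [MeasurableSpace Ω] (P : Measure Ω) [IsProbabilityMeasure P]
    (n : ℕ) (x y : Fin n → ℝ) (x0 y0 θ s : ℝ) (hs : 0 < s)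
    (lT : ℕ) (hlT : 1 ≤ lT)
    (a b : Fin n → ℝ) (ha : ∀ j, a j = x j - x0) (hb : ∀ j, b j = y j - y0)
    (hdenpos : ∀ j, 0 < a j * Real.sin θ + b j * Real.cos θ)
    (T : Fin n → Ω → ℝ) (hmeas : ∀ j, Measurable (T j)) (hTpos : ∀ j ω, 0 < T j ω)
    (hmean : ∀ j, (∫ ω, T j ω ∂P) = (a j * Real.sin θ + b j * Real.cos θ) / s) :
    -(∫ ω, deriv (fun u : ℝ => deriv (fun w : ℝ => ∑ j,
        ((2 * lT : ℝ) * Real.log ((2 * lT : ℝ) * u / (a j * Real.sin w + b j * Real.cos w)) +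
          ((2 * lT : ℝ) - 1) * Real.log (T j ω) -
          (2 * lT : ℝ) * u * T j ω / (a j * Real.sin w + b j * Real.cos w) -
          Real.log (Nat.factorial (2 * lT - 1)))) θ) s ∂P) =
      -((2 * lT : ℝ) / s) * ∑ j,
        (a j * Real.cos θ - b j * Real.sin θ) / (a j * Real.sin θ + b j * Real.cos θ) := by
  have hc0 : (0:ℝ) < 2 * lT := by
    have : (1:ℝ) ≤ (lT:ℝ) := by exact_mod_cast hlT
    linarith
  -- integrability of each T j
  have hint : ∀ j, Integrable (T j) P := by
    intro j
    by_contra h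
    have h0 := hmean j
    rw [integral_undef h] at h0
    have h1 : 0 < (a j * Real.sin θ + b j * Real.cos θ) / s :=
      div_pos (hdenpos j) hs
    rw [← h0] at h1
    exact lt_irrefl _ h1
  have hd : ∀ j, HasDerivAt (fun w => a j * Real.sin w + b j * Real.cos w)
      (a j * Real.cos θ - b j * Real.sin θ) θ := by
    intro j
    have h1 := (Real.hasDerivAt_sin θ).const_mul (a j)
    have h2 := (Real.hasDerivAt_cos θ).const_mul (b j)
    have h3 := h1.fun_add h2
    refine h3.congr_deriv ?_
    ring
  -- inner derivative computation, valid for u > 0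
  have hinner : ∀ (ω : Ω) (u : ℝ), 0 < u →
      deriv (fun w : ℝ => ∑ j,
        ((2 * lT : ℝ) * Real.log ((2 * lT : ℝ) * u / (a j * Real.sin w + b j * Real.cos w)) +
          ((2 * lT : ℝ) - 1) * Real.log (T j ω) -
          (2 * lT : ℝ) * u * T j ω / (a j * Real.sin w + b j * Real.cos w) -
          Real.log (Nat.factorial (2 * lT - 1)))) θ
      = ∑ j, ((2 * lT : ℝ) * T j ω * (a j * Real.cos θ - b j * Real.sin θ)
                / (a j * Real.sin θ + b j * Real.cos θ)^2 * u
            - (2 * lT : ℝ) * (a j * Real.cos θ - b j * Real.sin θ)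
                / (a j * Real.sin θ + b j * Real.cos θ)) := by
    intro ω u hu
    have H : HasDerivAt (fun w : ℝ => ∑ j,
        ((2 * lT : ℝ) * Real.log ((2 * lT : ℝ) * u / (a j * Real.sin w + b j * Real.cos w)) +
          ((2 * lT : ℝ) - 1) * Real.log (T j ω) -
          (2 * lT : ℝ) * u * T j ω / (a j * Real.sin w + b j * Real.cos w) -
          Real.log (Nat.factorial (2 * lT - 1))))
        (∑ j, ((2 * lT : ℝ) * T j ω * (a j * Real.cos θ - b j * Real.sin θ)
                / (a j * Real.sin θ + b j * Real.cos θ)^2 * u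
            - (2 * lT : ℝ) * (a j * Real.cos θ - b j * Real.sin θ)
                / (a j * Real.sin θ + b j * Real.cos θ))) θ := by
      apply HasDerivAt.fun_sum
      intro j _
      have hdj := hd j
      have hne : a j * Real.sin θ + b j * Real.cos θ ≠ 0 := ne_of_gt (hdenpos j)
      have hcu : (2 * lT : ℝ) * u ≠ 0 := ne_of_gt (mul_pos hc0 hu)
      have h1 : HasDerivAt (fun w : ℝ => (2 * lT : ℝ) * u / (a j * Real.sin w + b j * Real.cos w))
          ((0 * (a j * Real.sin θ + b j * Real.cos θ) -
            (2 * lT : ℝ) * u * (a j * Real.cos θ - b j * Real.sin θ)) /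
            (a j * Real.sin θ + b j * Real.cos θ)^2) θ :=
        (hasDerivAt_const θ ((2 * lT : ℝ) * u)).div hdj hne
      have hval : (2 * lT : ℝ) * u / (a j * Real.sin θ + b j * Real.cos θ) ≠ 0 :=
        div_ne_zero hcu hne
      have h2 := (h1.log hval).const_mul (2 * lT : ℝ)
      have h3 : HasDerivAt (fun w : ℝ =>
            (2 * lT : ℝ) * u * T j ω / (a j * Real.sin w + b j * Real.cos w))
          ((0 * (a j * Real.sin θ + b j * Real.cos θ) -
            (2 * lT : ℝ) * u * T j ω * (a j * Real.cos θ - b j * Real.sin θ)) /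
            (a j * Real.sin θ + b j * Real.cos θ)^2) θ :=
        (hasDerivAt_const θ ((2 * lT : ℝ) * u * T j ω)).div hdj hne
      have h4 := ((h2.fun_add (hasDerivAt_const θ (((2 * lT : ℝ) - 1) * Real.log (T j ω)))).fun_sub
          h3).fun_sub (hasDerivAt_const θ (Real.log (Nat.factorial (2 * lT - 1))))
      refine h4.congr_deriv ?_
      field_simp
      ring
    exact H.deriv
  -- derivative of the inner derivative with respect to u at s
  have houter : ∀ ω : Ω,
      deriv (fun u : ℝ => deriv (fun w : ℝ => ∑ j,
        ((2 * lT : ℝ) * Real.log ((2 * lT : ℝ) * u / (a j * Real.sin w + b j * Real.cos w)) +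
          ((2 * lT : ℝ) - 1) * Real.log (T j ω) -
          (2 * lT : ℝ) * u * T j ω / (a j * Real.sin w + b j * Real.cos w) -
          Real.log (Nat.factorial (2 * lT - 1)))) θ) s
      = ∑ j, (2 * lT : ℝ) * T j ω * (a j * Real.cos θ - b j * Real.sin θ)
                / (a j * Real.sin θ + b j * Real.cos θ)^2 := by
    intro ω
    have heq : (fun u : ℝ => deriv (fun w : ℝ => ∑ j,
        ((2 * lT : ℝ) * Real.log ((2 * lT : ℝ) * u / (a j * Real.sin w + b j * Real.cos w)) +
          ((2 * lT : ℝ) - 1) * Real.log (T j ω) -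
          (2 * lT : ℝ) * u * T j ω / (a j * Real.sin w + b j * Real.cos w) -
          Real.log (Nat.factorial (2 * lT - 1)))) θ)
        =ᶠ[nhds s] (fun u : ℝ => ∑ j,
          ((2 * lT : ℝ) * T j ω * (a j * Real.cos θ - b j * Real.sin θ)
                / (a j * Real.sin θ + b j * Real.cos θ)^2 * u
            - (2 * lT : ℝ) * (a j * Real.cos θ - b j * Real.sin θ)
                / (a j * Real.sin θ + b j * Real.cos θ))) := by
      filter_upwards [Ioi_mem_nhds hs] with u hu
      exact hinner ω u hu
    rw [Filter.EventuallyEq.deriv_eq heq]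
    have H : HasDerivAt (fun u : ℝ => ∑ j,
          ((2 * lT : ℝ) * T j ω * (a j * Real.cos θ - b j * Real.sin θ)
                / (a j * Real.sin θ + b j * Real.cos θ)^2 * u
            - (2 * lT : ℝ) * (a j * Real.cos θ - b j * Real.sin θ)
                / (a j * Real.sin θ + b j * Real.cos θ)))
        (∑ j, (2 * lT : ℝ) * T j ω * (a j * Real.cos θ - b j * Real.sin θ)
                / (a j * Real.sin θ + b j * Real.cos θ)^2) s := by
      apply HasDerivAt.fun_sum
      intro j _
      have h1 := (hasDerivAt_id s).const_mul
        ((2 * lT : ℝ) * T j ω * (a j * Real.cos θ - b j * Real.sin θ)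
                / (a j * Real.sin θ + b j * Real.cos θ)^2)
      have h2 := h1.sub_const ((2 * lT : ℝ) * (a j * Real.cos θ - b j * Real.sin θ)
                / (a j * Real.sin θ + b j * Real.cos θ))
      refine h2.congr_deriv ?_
      ring
    exact H.deriv
  rw [integral_congr_ae (Filter.Eventually.of_forall houter)]
  rw [integral_finset_sum _ (fun j _ => by
    have := (hint j).const_mul ((2 * lT : ℝ) * (a j * Real.cos θ - b j * Real.sin θ)
                / (a j * Real.sin θ + b j * Real.cos θ)^2)
    apply this.congr
    filter_upwards with ω
    field_simp)]
  have hjval : ∀ j, (∫ ω, (2 * lT : ℝ) * T j ω * (a j * Real.cos θ - b j * Real.sin θ)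
                / (a j * Real.sin θ + b j * Real.cos θ)^2 ∂P)
      = (2 * lT : ℝ) / s * ((a j * Real.cos θ - b j * Real.sin θ)
                / (a j * Real.sin θ + b j * Real.cos θ)) := by
    intro j
    have : (∫ ω, (2 * lT : ℝ) * T j ω * (a j * Real.cos θ - b j * Real.sin θ)
                / (a j * Real.sin θ + b j * Real.cos θ)^2 ∂P)
        = ((2 * lT : ℝ) * (a j * Real.cos θ - b j * Real.sin θ)
                / (a j * Real.sin θ + b j * Real.cos θ)^2) * ∫ ω, T j ω ∂P := by
      rw [← integral_const_mul]
      congr 1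
      funext ω
      ring
    rw [this, hmean j]
    have hne : a j * Real.sin θ + b j * Real.cos θ ≠ 0 := ne_of_gt (hdenpos j)
    field_simp
  rw [Finset.sum_congr rfl (fun j _ => hjval j), ← Finset.mul_sum]
  ring
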